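/- Let A be a dependent adder in a category 𝒞 with finite limits. Then for every object U of 𝒞, the set Hom_𝒞(U, A) is a monoid under the multiplication x · y := Σ^y (x ∘ p_y) with unit the constant morphism const_{1_A} : U → A; that is, this multiplication is associative and const_{1_A} is a two-sided unit. -/

import Mathlib

open CategoryTheory CategoryTheory.Limits

universe v u

/-- A dependent adder in a category `𝒞` with finite limits: an object `A`, a family
`p : F ⟶ A` (with `⟦x⟧ := pullback x p` for `x : U ⟶ A`), a unit `1_F : ⊤_ 𝒞 ⟶ F`,
natural dependent sum functions `Σ^x : (⟦x⟧ ⟶ A) → (U ⟶ A)` and flattening maps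
`f♭ : ⟦f⟧ ⟶ ⟦Σ^x f⟧` over `U`, satisfying the right unit, left unit, sum associativity
and flatten associativity axioms. -/
structure DependentAdder (𝒞 : Type u) [Category.{v} 𝒞] [HasFiniteLimits 𝒞] where
  /-- The underlying object. -/
  A : 𝒞
  /-- The total object of the family of index objects. -/
  F : 𝒞
  /-- The structural family map. -/
  p : F ⟶ A
  /-- The unit `1_F : * ⟶ F`; `1_A := 1_F ≫ p`. -/
  unit : ⊤_ 𝒞 ⟶ F
  /-- The dependent sum functions. -/
  sum : ∀ {U : 𝒞} (x : U ⟶ A), (pullback x p ⟶ A) → (U ⟶ A)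
  /-- Naturality of the dependent sums in `x ∈ 𝒞/A`. -/
  sum_natural : ∀ {U U' : 𝒞} (h : U ⟶ U') (y : U' ⟶ A) (g : pullback y p ⟶ A),
    h ≫ sum y g =
      sum (h ≫ y) (pullback.map (h ≫ y) p y p h (𝟙 F) (𝟙 A) (by simp) (by simp) ≫ g)
  /-- The flattening maps `f♭ : ⟦f⟧ ⟶ ⟦Σ^x f⟧`. -/
  flat : ∀ {U : 𝒞} (x : U ⟶ A) (f : pullback x p ⟶ A),
    pullback f p ⟶ pullback (sum x f) p
  /-- The flattening maps are morphisms over `U`. -/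
  flat_over : ∀ {U : 𝒞} (x : U ⟶ A) (f : pullback x p ⟶ A),
    flat x f ≫ pullback.fst (sum x f) p = pullback.fst f p ≫ pullback.fst x p
  /-- Right Unit Axiom: `Σ^x const_{1_A} = x`. -/
  right_unit : ∀ {U : 𝒞} (x : U ⟶ A),
    sum x (terminal.from (pullback x p) ≫ unit ≫ p) = x
  /-- Left Unit Axiom: `Σ^{const_{1_A}} (f ∘ (const_{1_A})♭) = f`. -/
  left_unit : ∀ {U : 𝒞} (x : U ⟶ A) (f : pullback x p ⟶ A),
    sum (terminal.from (pullback x p) ≫ unit ≫ p)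
      (flat x (terminal.from (pullback x p) ≫ unit ≫ p) ≫
        eqToHom (by rw [right_unit]) ≫ f) = f
  /-- Sum Associativity Axiom: `Σ^{Σ^x f} g = Σ^x (Σ^f (g ∘ f♭))`. -/
  sum_assoc : ∀ {U : 𝒞} (x : U ⟶ A) (f : pullback x p ⟶ A)
    (g : pullback (sum x f) p ⟶ A),
    sum (sum x f) g = sum x (sum f (flat x f ≫ g))
  /-- Flatten Associativity Axiom:
  `(g ∘ f♭)♭ ≫ (f⊠g)♭ = (f♭ ×_A id_F) ≫ g♭` (up to the canonical identification). -/
  flat_assoc : ∀ {U : 𝒞} (x : U ⟶ A) (f : pullback x p ⟶ A)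
    (g : pullback (sum x f) p ⟶ A),
    flat f (flat x f ≫ g) ≫ flat x (sum f (flat x f ≫ g)) =
      pullback.map (flat x f ≫ g) p g p (flat x f) (𝟙 F) (𝟙 A) (by simp) (by simp) ≫
        flat (sum x f) g ≫ eqToHom (by rw [sum_assoc])

variable {𝒞 : Type u} [Category.{v} 𝒞] [HasFiniteLimits 𝒞]

variable {𝒞 : Type u} [Category.{v} 𝒞] [HasFiniteLimits 𝒞]


lemma eqToHom_fst_aux (D : DependentAdder 𝒞) {U : 𝒞} {x y : U ⟶ D.A} (e : x = y)
    (he : pullback x D.p = pullback y D.p) :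
    eqToHom he ≫ pullback.fst y D.p = pullback.fst x D.p := by subst e; simp

lemma sum_ext_aux (D : DependentAdder 𝒞) {U : 𝒞} {b b' : U ⟶ D.A} (e : b = b')
    (g : pullback b D.p ⟶ D.A) (g' : pullback b' D.p ⟶ D.A)
    (hg : ∀ (he : pullback b D.p = pullback b' D.p), g = eqToHom he ≫ g') :
    D.sum b g = D.sum b' g' := by
  subst e
  rw [hg rfl]
  simp

lemma left_unit_aux (D : DependentAdder 𝒞) {U : 𝒞} (x w : U ⟶ D.A) :
    D.sum (terminal.from (pullback x D.p) ≫ D.unit ≫ D.p)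
      (pullback.fst (terminal.from (pullback x D.p) ≫ D.unit ≫ D.p) D.p ≫
        pullback.fst x D.p ≫ w) = pullback.fst x D.p ≫ w := by
  have h := D.left_unit x (pullback.fst x D.p ≫ w)
  have hcomp : D.flat x (terminal.from (pullback x D.p) ≫ D.unit ≫ D.p) ≫
      eqToHom (by rw [D.right_unit]) ≫ pullback.fst x D.p =
      pullback.fst (terminal.from (pullback x D.p) ≫ D.unit ≫ D.p) D.p ≫
        pullback.fst x D.p := by
    rw [eqToHom_fst_aux D (D.right_unit x) (by rw [D.right_unit]), D.flat_over]
  refine Eq.trans ?_ h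
  congr 1
  have h2 := congrArg (· ≫ w) hcomp
  simpa only [Category.assoc] using h2.symm

lemma pre_key_aux (D : DependentAdder 𝒞) {U : 𝒞} (o x : U ⟶ D.A)
    (e : pullback.fst o D.p ≫ o = terminal.from (pullback o D.p) ≫ D.unit ≫ D.p) :
    pullback.fst o D.p ≫ D.sum o (pullback.fst o D.p ≫ x) =
      pullback.fst o D.p ≫ x := by
  rw [D.sum_natural (pullback.fst o D.p) o (pullback.fst o D.p ≫ x)]
  refine (sum_ext_aux D e _ _ ?_).trans (left_unit_aux D o x)
  intro he
  have h1 : pullback.map (pullback.fst o D.p ≫ o) D.p o D.p (pullback.fst o D.p)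
      (𝟙 D.F) (𝟙 D.A) (by simp) (by simp) ≫ pullback.fst o D.p =
      pullback.fst (pullback.fst o D.p ≫ o) D.p ≫ pullback.fst o D.p := by exact pullback.lift_fst _ _ _
  rw [← Category.assoc, h1, ← eqToHom_fst_aux D e he]
  simp only [Category.assoc]

/-- For every dependent adder `A` in `𝒞` and every object `U`, the hom-set `Hom(U, A)` is a
monoid under `x · y := Σ^y (x ∘ p_y)` with unit the constant morphism `const_{1_A}`. -/
theorem DependentAdder.hom_monoid (D : DependentAdder 𝒞) (U : 𝒞) :
    let one : U ⟶ D.A := terminal.from U ≫ D.unit ≫ D.p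
    let mul : (U ⟶ D.A) → (U ⟶ D.A) → (U ⟶ D.A) :=
      fun x y => D.sum y (pullback.fst y D.p ≫ x)
    (∀ x y z : U ⟶ D.A, mul (mul x y) z = mul x (mul y z)) ∧
      (∀ x : U ⟶ D.A, mul one x = x) ∧ (∀ x : U ⟶ D.A, mul x one = x) := by
  intro one mul
  refine ⟨?_, ?_, ?_⟩
  · -- associativity
    intro x y z
    show D.sum z (pullback.fst z D.p ≫ D.sum y (pullback.fst y D.p ≫ x)) =
      D.sum (D.sum z (pullback.fst z D.p ≫ y))
        (pullback.fst (D.sum z (pullback.fst z D.p ≫ y)) D.p ≫ x)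
    rw [D.sum_assoc z (pullback.fst z D.p ≫ y)
      (pullback.fst (D.sum z (pullback.fst z D.p ≫ y)) D.p ≫ x),
      D.sum_natural (pullback.fst z D.p) y (pullback.fst y D.p ≫ x)]
    congr 1
    rw [← Category.assoc, ← Category.assoc, D.flat_over]
    congr 1
    simp
    rw [← Category.assoc, ← Category.assoc]; congr 1
    exact pullback.lift_fst _ _ _
  · -- left unit
    intro x
    show D.sum x (pullback.fst x D.p ≫ terminal.from U ≫ D.unit ≫ D.p) = x
    rw [show pullback.fst x D.p ≫ terminal.from U ≫ D.unit ≫ D.p =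
      terminal.from (pullback x D.p) ≫ D.unit ≫ D.p by
        rw [← Category.assoc, terminal.comp_from]]
    exact D.right_unit x
  · -- right unit
    intro x
    show D.sum (terminal.from U ≫ D.unit ≫ D.p)
      (pullback.fst (terminal.from U ≫ D.unit ≫ D.p) D.p ≫ x) = x
    have e : pullback.fst (terminal.from U ≫ D.unit ≫ D.p) D.p ≫
        (terminal.from U ≫ D.unit ≫ D.p) =
        terminal.from (pullback (terminal.from U ≫ D.unit ≫ D.p) D.p) ≫
          D.unit ≫ D.p := by
      calc pullback.fst (terminal.from U ≫ D.unit ≫ D.p) D.p ≫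
            (terminal.from U ≫ D.unit ≫ D.p)
          = (pullback.fst (terminal.from U ≫ D.unit ≫ D.p) D.p ≫ terminal.from U) ≫
              D.unit ≫ D.p := by simp only [Category.assoc]
        _ = terminal.from (pullback (terminal.from U ≫ D.unit ≫ D.p) D.p) ≫
              D.unit ≫ D.p := by rw [terminal.comp_from]
    have key := pre_key_aux D (terminal.from U ≫ D.unit ≫ D.p) x e
    have hsec : pullback.lift (𝟙 U) (terminal.from U ≫ D.unit) (by simp) ≫
        pullback.fst (terminal.from U ≫ D.unit ≫ D.p) D.p = 𝟙 U :=
      pullback.lift_fst _ _ _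
    calc D.sum (terminal.from U ≫ D.unit ≫ D.p)
          (pullback.fst (terminal.from U ≫ D.unit ≫ D.p) D.p ≫ x)
        = (pullback.lift (𝟙 U) (terminal.from U ≫ D.unit) (by simp) ≫
            pullback.fst (terminal.from U ≫ D.unit ≫ D.p) D.p) ≫
            D.sum (terminal.from U ≫ D.unit ≫ D.p)
              (pullback.fst (terminal.from U ≫ D.unit ≫ D.p) D.p ≫ x) := by
          rw [hsec, Category.id_comp]
      _ = pullback.lift (𝟙 U) (terminal.from U ≫ D.unit) (by simp) ≫
            (pullback.fst (terminal.from U ≫ D.unit ≫ D.p) D.p ≫ x) := by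
          rw [Category.assoc, key]
      _ = x := by rw [← Category.assoc, hsec, Category.id_comp]
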